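/- Let ω_1, …, ω_m be positive integers. (a) If V_1, …, V_m are 2-dimensional subspaces of ℂ⁴ with V_i ∩ V_j = 0 for all i ≠ j, and ω_i ≤ (1/2)·Σ_{j=1}^m ω_j for every i, then the configuration {V_i} is ℘_ω-semistable. (b) Consequently, there exists a ℘_ω-semistable configuration of m two-dimensional subspaces of ℂ⁴ if and only if ω_i ≤ (1/2)·Σ_{j=1}^m ω_j for every i. -/

import Mathlib

open Module

noncomputable section

variable {V : Type*} [AddCommGroup V] [Module ℂ V]

/-- `℘_ω(H) = (1/dim H)·Σ_i ω_i·dim(V_i ∩ H)` for a configuration of subspaces of `V`. -/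
def slopeSub {m : ℕ} (ω : Fin m → ℕ) (Vc : Fin m → Submodule ℂ V) (H : Submodule ℂ V) : ℚ :=
  (∑ i, (ω i : ℚ) * (finrank ℂ ↥(Vc i ⊓ H) : ℚ)) / (finrank ℂ ↥H : ℚ)

/-- `℘_ω({V_i}) = (1/dim V)·Σ_i ω_i·dim V_i`. -/
def totalSub {m : ℕ} (ω : Fin m → ℕ) (Vc : Fin m → Submodule ℂ V) : ℚ :=
  (∑ i, (ω i : ℚ) * (finrank ℂ ↥(Vc i) : ℚ)) / (finrank ℂ V : ℚ)

/-- The configuration `{V_i}` is `℘_ω`-semistable. -/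
def SubSemistable {m : ℕ} (ω : Fin m → ℕ) (Vc : Fin m → Submodule ℂ V) : Prop :=
  ∀ H : Submodule ℂ V, H ≠ ⊥ → H ≠ ⊤ → slopeSub ω Vc H ≤ totalSub ω Vc

/-- The configuration `{V_i}` is `℘_ω`-stable. -/
def SubStable {m : ℕ} (ω : Fin m → ℕ) (Vc : Fin m → Submodule ℂ V) : Prop :=
  ∀ H : Submodule ℂ V, H ≠ ⊥ → H ≠ ⊤ → slopeSub ω Vc H < totalSub ω Vc

/- ### Auxiliary lemmas -/

lemma aux_sum_bound {m : ℕ} (ω : Fin m → ℕ) (f : Fin m → ℚ) (i0 : Fin m) (l u : ℚ)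
    (hu : f i0 ≤ u) (hfl : ∀ i, i ≠ i0 → f i ≤ l) :
    ∑ i, (ω i : ℚ) * f i ≤ (ω i0 : ℚ) * (u - l) + l * ∑ i, (ω i : ℚ) := by
  classical
  rw [← Finset.add_sum_erase _ (fun i => (ω i : ℚ) * f i) (Finset.mem_univ i0),
      ← Finset.add_sum_erase _ (fun i => (ω i : ℚ)) (Finset.mem_univ i0)]
  have h1 : (ω i0 : ℚ) * f i0 ≤ (ω i0 : ℚ) * u :=
    mul_le_mul_of_nonneg_left hu (by positivity)
  have h2 : ∑ i ∈ Finset.univ.erase i0, (ω i : ℚ) * f i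
      ≤ ∑ i ∈ Finset.univ.erase i0, l * (ω i : ℚ) := by
    apply Finset.sum_le_sum
    intro i hi
    have h := hfl i (Finset.ne_of_mem_erase hi)
    have : (0:ℚ) ≤ (ω i : ℚ) := by positivity
    nlinarith
  rw [← Finset.mul_sum] at h2
  linarith

lemma aux_le_of_finrank_inf_left {A B : Submodule ℂ (Fin 4 → ℂ)}
    (h : finrank ℂ ↥A ≤ finrank ℂ ↥(A ⊓ B)) : A ≤ B := by
  have h2 := Submodule.eq_of_le_of_finrank_le inf_le_left h
  exact le_trans h2.ge inf_le_right

lemma aux_le_of_finrank_inf_right {A B : Submodule ℂ (Fin 4 → ℂ)}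
    (h : finrank ℂ ↥B ≤ finrank ℂ ↥(A ⊓ B)) : B ≤ A := by
  have h2 := Submodule.eq_of_le_of_finrank_le inf_le_right h
  exact le_trans h2.ge inf_le_left

lemma aux_total {m : ℕ} (ω : Fin m → ℕ) (Vc : Fin m → Submodule ℂ (Fin 4 → ℂ))
    (h2 : ∀ i, finrank ℂ ↥(Vc i) = 2) :
    totalSub ω Vc = (∑ j, (ω j : ℚ)) / 2 := by
  rw [totalSub, Module.finrank_fin_fun]
  simp only [h2]
  push_cast
  rw [← Finset.sum_mul]
  ring

/-- Part (a): pairwise transverse 2-planes with all weights at most half the total weight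
form a semistable configuration. -/
lemma aux_part_a {m : ℕ} (ω : Fin m → ℕ) (Vc : Fin m → Submodule ℂ (Fin 4 → ℂ))
    (h2 : ∀ i, finrank ℂ ↥(Vc i) = 2)
    (hdisj : ∀ i j, i ≠ j → Vc i ⊓ Vc j = ⊥)
    (hhalf : ∀ i, (ω i : ℚ) ≤ (∑ j, (ω j : ℚ)) / 2) :
    SubSemistable ω Vc := by
  classical
  intro H hbot htop
  have hS0 : (0:ℚ) ≤ ∑ j, (ω j : ℚ) := Finset.sum_nonneg fun i _ => by positivity
  have hd0 : finrank ℂ ↥H ≠ 0 := fun h => hbot (Submodule.finrank_eq_zero.mp h)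
  have hdlt : finrank ℂ ↥H < 4 := by
    have := Submodule.finrank_lt (K := ℂ) (V := Fin 4 → ℂ) htop
    rwa [Module.finrank_fin_fun] at this
  have hfd : ∀ i, finrank ℂ ↥(Vc i ⊓ H) ≤ finrank ℂ ↥H :=
    fun i => Submodule.finrank_mono inf_le_right
  have hf2 : ∀ i, finrank ℂ ↥(Vc i ⊓ H) ≤ 2 :=
    fun i => (h2 i) ▸ Submodule.finrank_mono inf_le_left
  rw [aux_total ω Vc h2, slopeSub,
    div_le_div_iff₀ (by exact_mod_cast Nat.pos_of_ne_zero hd0) two_pos]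
  have hcases : finrank ℂ ↥H = 1 ∨ finrank ℂ ↥H = 2 ∨ finrank ℂ ↥H = 3 := by omega
  rcases hcases with hd | hd | hd
  · -- dim H = 1
    rw [hd]
    by_cases hex : ∃ i, H ≤ Vc i
    · obtain ⟨i0, hi0⟩ := hex
      have key := aux_sum_bound ω (fun i => (finrank ℂ ↥(Vc i ⊓ H) : ℚ)) i0 0 1
        (by show ((finrank ℂ ↥(Vc i0 ⊓ H) : ℕ) : ℚ) ≤ 1; exact_mod_cast hd ▸ hfd i0)
        (fun i hne => by
          have hz : finrank ℂ ↥(Vc i ⊓ H) = 0 := by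
            by_contra h
            have h1 : finrank ℂ ↥H ≤ finrank ℂ ↥(Vc i ⊓ H) := by omega
            have hle : H ≤ Vc i := aux_le_of_finrank_inf_right h1
            have hle2 : H ≤ Vc i ⊓ Vc i0 := le_inf hle hi0
            rw [hdisj i i0 hne] at hle2
            exact hbot (le_bot_iff.mp hle2)
          simp [hz])
      have := hhalf i0
      push_cast
      linarith
    · have hz : ∀ i, finrank ℂ ↥(Vc i ⊓ H) = 0 := by
        intro i
        by_contra h
        have h1 : finrank ℂ ↥H ≤ finrank ℂ ↥(Vc i ⊓ H) := by omega
        exact hex ⟨i, aux_le_of_finrank_inf_right h1⟩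
      have : ∑ i, (ω i : ℚ) * (finrank ℂ ↥(Vc i ⊓ H) : ℚ) = 0 := by
        apply Finset.sum_eq_zero
        intro i _
        simp [hz i]
      push_cast
      linarith
  · -- dim H = 2
    rw [hd]
    by_cases hex : ∃ i, finrank ℂ ↥(Vc i ⊓ H) = 2
    · obtain ⟨i0, hi0⟩ := hex
      have hHeq : H = Vc i0 := by
        have hH : Vc i0 ⊓ H = H :=
          Submodule.eq_of_le_of_finrank_le inf_le_right (by rw [hd, hi0])
        have hV : Vc i0 ⊓ H = Vc i0 :=
          Submodule.eq_of_le_of_finrank_le inf_le_left (by rw [h2 i0, hi0])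
        rw [← hH, hV]
      have key := aux_sum_bound ω (fun i => (finrank ℂ ↥(Vc i ⊓ H) : ℚ)) i0 0 2
        (by show ((finrank ℂ ↥(Vc i0 ⊓ H) : ℕ) : ℚ) ≤ 2; exact_mod_cast hf2 i0)
        (fun i hne => by
          have hz : Vc i ⊓ H = ⊥ := by rw [hHeq]; exact hdisj i i0 hne
          simp [hz])
      have := hhalf i0
      push_cast
      linarith
    · push_neg at hex
      have h1 : ∀ i, finrank ℂ ↥(Vc i ⊓ H) ≤ 1 := by
        intro i
        have := hf2 i
        have := hex i
        omega
      have hsum : ∑ i, (ω i : ℚ) * (finrank ℂ ↥(Vc i ⊓ H) : ℚ) ≤ ∑ i, (ω i : ℚ) := by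
        apply Finset.sum_le_sum
        intro i _
        have : ((finrank ℂ ↥(Vc i ⊓ H) : ℕ) : ℚ) ≤ 1 := by exact_mod_cast h1 i
        nlinarith [show (0:ℚ) ≤ (ω i : ℚ) by positivity]
      push_cast
      linarith
  · -- dim H = 3
    rw [hd]
    by_cases hex : ∃ i, Vc i ≤ H
    · obtain ⟨i0, hi0⟩ := hex
      have key := aux_sum_bound ω (fun i => (finrank ℂ ↥(Vc i ⊓ H) : ℚ)) i0 1 2
        (by show ((finrank ℂ ↥(Vc i0 ⊓ H) : ℕ) : ℚ) ≤ 2; exact_mod_cast hf2 i0)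
        (fun i hne => by
          have h1 : finrank ℂ ↥(Vc i ⊓ H) ≤ 1 := by
            by_contra h
            have heq2 : finrank ℂ ↥(Vc i) ≤ finrank ℂ ↥(Vc i ⊓ H) := by
              have := hf2 i; rw [h2 i]; omega
            have hle : Vc i ≤ H := aux_le_of_finrank_inf_left heq2
            have hsup : Vc i ⊔ Vc i0 ≤ H := sup_le hle hi0
            have hfs : finrank ℂ ↥(Vc i ⊔ Vc i0) ≤ 3 := hd ▸ Submodule.finrank_mono hsup
            have hform := Submodule.finrank_sup_add_finrank_inf_eq (Vc i) (Vc i0)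
            rw [hdisj i i0 hne, h2 i, h2 i0, finrank_bot] at hform
            omega
          show ((finrank ℂ ↥(Vc i ⊓ H) : ℕ) : ℚ) ≤ 1
          exact_mod_cast h1)
      have := hhalf i0
      push_cast
      linarith
    · push_neg at hex
      have h1 : ∀ i, finrank ℂ ↥(Vc i ⊓ H) ≤ 1 := by
        intro i
        by_contra h
        apply hex i
        apply aux_le_of_finrank_inf_left
        have := hf2 i; rw [h2 i]; omega
      have hsum : ∑ i, (ω i : ℚ) * (finrank ℂ ↥(Vc i ⊓ H) : ℚ) ≤ ∑ i, (ω i : ℚ) := by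
        apply Finset.sum_le_sum
        intro i _
        have : ((finrank ℂ ↥(Vc i ⊓ H) : ℕ) : ℚ) ≤ 1 := by exact_mod_cast h1 i
        nlinarith [show (0:ℚ) ≤ (ω i : ℚ) by positivity]
      push_cast
      linarith

/- ### The construction of pairwise transverse 2-planes -/

def planeAt (t : ℂ) : Submodule ℂ (Fin 4 → ℂ) :=
  Submodule.span ℂ {![1, 0, t, 0], ![0, 1, 0, t]}

lemma planeAt_finrank (t : ℂ) : finrank ℂ ↥(planeAt t) = 2 := by
  have hind : LinearIndependent ℂ ![(![1, 0, t, 0] : Fin 4 → ℂ), ![0, 1, 0, t]] := by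
    rw [LinearIndependent.pair_iff]
    intro a b hab
    have h0 := congrFun hab 0
    have h1 := congrFun hab 1
    simp at h0 h1
    exact ⟨h0, h1⟩
  have hset : Set.range ![(![1, 0, t, 0] : Fin 4 → ℂ), ![0, 1, 0, t]]
      = {![1, 0, t, 0], ![0, 1, 0, t]} := by
    ext v
    simp [Fin.exists_fin_two, eq_comm]
    tauto
  have : planeAt t = Submodule.span ℂ (Set.range ![(![1, 0, t, 0] : Fin 4 → ℂ), ![0, 1, 0, t]]) := by
    rw [planeAt, hset]
  rw [this, finrank_span_eq_card hind]
  simp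

lemma planeAt_disjoint {s t : ℂ} (hst : s ≠ t) : planeAt s ⊓ planeAt t = ⊥ := by
  rw [Submodule.eq_bot_iff]
  intro x hx
  rw [Submodule.mem_inf] at hx
  obtain ⟨hxs, hxt⟩ := hx
  rw [planeAt, Submodule.mem_span_pair] at hxs hxt
  obtain ⟨a, b, hab⟩ := hxs
  obtain ⟨c, d, hcd⟩ := hxt
  have e0 := congrFun (hab.trans hcd.symm) 0
  have e1 := congrFun (hab.trans hcd.symm) 1
  have e2 := congrFun (hab.trans hcd.symm) 2
  have e3 := congrFun (hab.trans hcd.symm) 3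
  simp at e0 e1 e2 e3
  have ha : a = 0 := by
    have : a * (s - t) = 0 := by rw [mul_sub]; rw [e0] at e2 ⊢; linear_combination e2
    rcases mul_eq_zero.mp this with h | h
    · exact h
    · exact absurd (sub_eq_zero.mp h) hst
  have hb : b = 0 := by
    have : b * (s - t) = 0 := by rw [mul_sub]; rw [e1] at e3 ⊢; linear_combination e3
    rcases mul_eq_zero.mp this with h | h
    · exact h
    · exact absurd (sub_eq_zero.mp h) hst
  rw [← hab, ha, hb]
  simp

/-- (a) pairwise transverse 2-planes in `ℂ⁴` form a `℘_ω`-semistable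
configuration whenever each weight is at most half the total weight; (b) a `℘_ω`-semistable
configuration of 2-planes in `ℂ⁴` exists iff each weight is at most half the total weight. -/
theorem stmt_18 (m : ℕ) (hm : 1 ≤ m) (ω : Fin m → ℕ) (hω : ∀ i, 0 < ω i) :
    (∀ Vc : Fin m → Submodule ℂ (Fin 4 → ℂ),
      (∀ i, finrank ℂ ↥(Vc i) = 2) →
      (∀ i j, i ≠ j → Vc i ⊓ Vc j = ⊥) →
      (∀ i, (ω i : ℚ) ≤ (∑ j, (ω j : ℚ)) / 2) →
      SubSemistable ω Vc) ∧
    ((∃ Vc : Fin m → Submodule ℂ (Fin 4 → ℂ),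
        (∀ i, finrank ℂ ↥(Vc i) = 2) ∧ SubSemistable ω Vc) ↔
      ∀ i, (ω i : ℚ) ≤ (∑ j, (ω j : ℚ)) / 2) := by
  constructor
  · exact fun Vc h2 hdisj hhalf => aux_part_a ω Vc h2 hdisj hhalf
  constructor
  · rintro ⟨Vc, h2, hss⟩ i
    have hne_bot : Vc i ≠ ⊥ := by
      intro h
      have := h2 i
      rw [h, finrank_bot] at this
      exact absurd this (by norm_num)
    have hne_top : Vc i ≠ ⊤ := by
      intro h
      have := h2 i
      rw [h, finrank_top, Module.finrank_fin_fun] at this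
      exact absurd this (by norm_num)
    have hsl := hss (Vc i) hne_bot hne_top
    rw [aux_total ω Vc h2, slopeSub, h2 i] at hsl
    have hterm : (ω i : ℚ) * (finrank ℂ ↥(Vc i ⊓ Vc i) : ℚ) = 2 * (ω i : ℚ) := by
      rw [inf_idem, h2 i]
      push_cast
      ring
    have hlow : 2 * (ω i : ℚ) ≤ ∑ j, (ω j : ℚ) * (finrank ℂ ↥(Vc j ⊓ Vc i) : ℚ) := by
      rw [← hterm]
      apply Finset.single_le_sum (f := fun j => (ω j : ℚ) * (finrank ℂ ↥(Vc j ⊓ Vc i) : ℚ))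
        (fun j _ => by positivity) (Finset.mem_univ i)
    rw [div_le_div_iff₀ (by norm_num) (by norm_num)] at hsl
    push_cast at hsl
    linarith
  · intro hhalf
    refine ⟨fun i => planeAt ((i : ℕ) : ℂ), fun i => planeAt_finrank _, ?_⟩
    apply aux_part_a ω _ (fun i => planeAt_finrank _) ?_ hhalf
    intro i j hij
    apply planeAt_disjoint
    intro h
    exact hij (Fin.val_injective (Nat.cast_injective h))
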